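/- For λ ∈ [4/19, 1], the function m̄₁(λ) := (π c₆ / 2) [ ((1 − λ)/2) ln λ + ((λ + 1)²/(2λ)) ln(λ + 1) ] is increasing, and in particular its infimum over [4/19, 1] equals m̄₁(4/19) > 0.0125, where c₆ = 5/(18√3). -/

import Mathlib

open Real Set

noncomputable def c6 : ℝ := 5 / (18 * Real.sqrt 3)

noncomputable def mbar1 (l : ℝ) : ℝ :=
  π * c6 / 2 * ((1 - l) / 2 * Real.log l + (l + 1) ^ 2 / (2 * l) * Real.log (l + 1))

lemma sqrt3_bounds : (1.7320508 : ℝ) < Real.sqrt 3 ∧ Real.sqrt 3 < 1.7320509 := by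
  have h := Real.sq_sqrt (by norm_num : (3:ℝ) ≥ 0)
  have h0 := Real.sqrt_nonneg 3
  constructor <;> nlinarith

lemma log2319_gt : (0.191055 : ℝ) < Real.log (23 / 19) := by
  have h := Real.abs_log_sub_add_sum_range_le (x := -(4/19 : ℝ))
    (by rw [abs_neg, abs_of_nonneg] <;> norm_num) 9
  rw [abs_neg, abs_of_nonneg (by norm_num : (0:ℝ) ≤ 4/19)] at h
  simp only [Finset.sum_range_succ, Finset.sum_range_zero] at h
  rw [abs_le] at h
  have h2 := h.2
  norm_num at h2 ⊢
  linarith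

lemma log1916_lt : Real.log (19 / 16) < 0.1718503 := by
  have h := Real.abs_log_sub_add_sum_range_le (x := (3/19 : ℝ))
    (by rw [abs_of_nonneg] <;> norm_num) 9
  rw [abs_of_nonneg (by norm_num : (0:ℝ) ≤ 3/19)] at h
  simp only [Finset.sum_range_succ, Finset.sum_range_zero] at h
  rw [abs_le] at h
  have h1 := h.1
  have e : Real.log (1 - 3/19 : ℝ) = - Real.log (19/16) := by
    rw [show (1 - 3/19 : ℝ) = (19/16)⁻¹ by norm_num, Real.log_inv]
  rw [e] at h1
  norm_num at h1 ⊢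
  linarith

lemma log194_lt : Real.log (19 / 4) < 1.5581448 := by
  have h : (19/4 : ℝ) = (19/16) * 2^2 := by norm_num
  rw [h, Real.log_mul (by norm_num) (by positivity), Real.log_pow]
  have := log1916_lt
  have := Real.log_two_lt_d9
  push_cast
  linarith

lemma mbar1_deriv (x : ℝ) (hx : x ∈ Set.Ioo (4/19 : ℝ) 1) :
    HasDerivAt mbar1
      (π * c6 / 2 * ((-(1/2)) * Real.log x + (1 - x)/2 * x⁻¹ +
        (((2 * (x+1)) * (2*x) - (x+1)^2 * 2) / (2*x)^2 * Real.log (x+1) +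
          (x+1)^2 / (2*x) * (1 / (x+1))))) x := by
  have hx0 : (0:ℝ) < x := lt_trans (by norm_num) hx.1
  have hx0' : x ≠ 0 := ne_of_gt hx0
  have hx1 : x + 1 ≠ 0 := by linarith
  have h2x : (2*x : ℝ) ≠ 0 := by positivity
  have h1 : HasDerivAt (fun l : ℝ => (1 - l)/2) (-(1/2)) x := by
    have h := ((hasDerivAt_id x).const_sub 1).div_const 2
    refine h.congr_deriv ?_
    norm_num
  have hlog : HasDerivAt Real.log x⁻¹ x := Real.hasDerivAt_log hx0'
  have hA : HasDerivAt (fun l : ℝ => (1 - l)/2 * Real.log l)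
      ((-(1/2)) * Real.log x + (1 - x)/2 * x⁻¹) x := h1.mul hlog
  have hu : HasDerivAt (fun l : ℝ => (l+1)^2) (2 * (x+1)) x := by
    have := ((hasDerivAt_id x).add_const 1).fun_pow 2
    simpa [mul_comm] using this
  have hv : HasDerivAt (fun l : ℝ => 2 * l) 2 x := by
    simpa using (hasDerivAt_id x).const_mul 2
  have hq : HasDerivAt (fun l : ℝ => (l+1)^2 / (2*l))
      (((2 * (x+1)) * (2*x) - (x+1)^2 * 2) / (2*x)^2) x := hu.div hv h2x
  have hlog2 : HasDerivAt (fun l : ℝ => Real.log (l+1)) (1 / (x+1)) x := by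
    have := ((hasDerivAt_id x).add_const 1).log hx1
    simpa using this
  have hB : HasDerivAt (fun l : ℝ => (l+1)^2 / (2*l) * Real.log (l+1))
      (((2 * (x+1)) * (2*x) - (x+1)^2 * 2) / (2*x)^2 * Real.log (x+1) +
        (x+1)^2 / (2*x) * (1 / (x+1))) x := hq.mul hlog2
  exact ((hA.add hB).const_mul (π * c6 / 2))

lemma mbar1_strictMono : StrictMonoOn mbar1 (Set.Icc (4 / 19 : ℝ) 1) := by
  have hC : (0:ℝ) < π * c6 / 2 := by
    have h3 : (0:ℝ) < Real.sqrt 3 := Real.sqrt_pos.mpr (by norm_num)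
    have hc : (0:ℝ) < c6 := by unfold c6; positivity
    positivity
  apply StrictMonoOn.mono ?_ (le_refl _)
  apply strictMonoOn_of_deriv_pos (convex_Icc _ _)
  · -- continuity
    intro x hx
    have hx0 : (0:ℝ) < x := lt_of_lt_of_le (by norm_num) hx.1
    apply ContinuousAt.continuousWithinAt
    unfold mbar1
    have h1 : ContinuousAt Real.log x := Real.continuousAt_log (ne_of_gt hx0)
    have h2 : ContinuousAt (fun l : ℝ => Real.log (l+1)) x :=
      (Real.continuousAt_log (by positivity)).comp (by fun_prop)
    have h3 : ContinuousAt (fun l : ℝ => (l + 1) ^ 2 / (2 * l)) x := by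
      apply ContinuousAt.div (by fun_prop) (by fun_prop)
      positivity
    exact (((continuousAt_const.sub continuousAt_id).div_const 2).mul h1 |>.add
      (h3.mul h2)).const_mul _
  · intro x hx
    rw [interior_Icc] at hx
    rw [(mbar1_deriv x hx).deriv]
    have hx0 : (0:ℝ) < x := lt_trans (by norm_num) hx.1
    have hx1 : x < 1 := hx.2
    have hlogx : Real.log x ≤ 0 := Real.log_nonpos (le_of_lt hx0) (le_of_lt hx1)
    have hlogx1 : 0 ≤ Real.log (x+1) := Real.log_nonneg (by linarith)
    have hlogx1' : Real.log (x+1) ≤ x := by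
      have := Real.log_le_sub_one_of_pos (show (0:ℝ) < x + 1 by linarith)
      linarith
    apply mul_pos hC
    have e1 : ((2 * (x+1)) * (2*x) - (x+1)^2 * 2) / (2*x)^2 = (x^2 - 1) / (2*x^2) := by
      field_simp; ring
    have hxne : x ≠ 0 := ne_of_gt hx0
    have hx1ne : x + 1 ≠ 0 := by nlinarith
    have e2 : (x+1)^2 / (2*x) * (1 / (x+1)) = (x+1) / (2*x) := by
      field_simp
    rw [e1, e2]
    have hcoef : (x^2 - 1) / (2*x^2) ≤ 0 := by
      apply div_nonpos_of_nonpos_of_nonneg <;> nlinarith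
    have h3 : (x^2 - 1) / (2*x^2) * x ≤ (x^2 - 1) / (2*x^2) * Real.log (x+1) :=
      mul_le_mul_of_nonpos_left hlogx1' hcoef
    have h4 : (x^2 - 1) / (2*x^2) * x = (x^2 - 1) / (2*x) := by
      field_simp
    rw [h4] at h3
    have h5 : (0:ℝ) < (1 - x)/2 * x⁻¹ := mul_pos (by linarith) (inv_pos.mpr hx0)
    have h6 : (0:ℝ) < (x^2 - 1) / (2*x) + (x+1) / (2*x) := by
      rw [← add_div, lt_div_iff₀ (by nlinarith : (0:ℝ) < 2*x)]
      nlinarith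
    nlinarith [mul_nonpos_of_nonneg_of_nonpos
      (le_of_lt (show (0:ℝ) < (1:ℝ)/2 by norm_num)) hlogx]

/-- On `[4/19, 1]` the function `m̄₁` is increasing; in particular its infimum over
`[4/19, 1]` is attained at `4/19` and `m̄₁(4/19) > 0.0125`. -/
theorem stmt17 :
    StrictMonoOn mbar1 (Set.Icc (4 / 19 : ℝ) 1) ∧
    IsLeast (mbar1 '' Set.Icc (4 / 19 : ℝ) 1) (mbar1 (4 / 19)) ∧
    0.0125 < mbar1 (4 / 19) := by
  have hmono := mbar1_strictMono
  have hmem : (4/19 : ℝ) ∈ Set.Icc (4/19 : ℝ) 1 := by norm_num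
  refine ⟨hmono, ⟨⟨4/19, hmem, rfl⟩, ?_⟩, ?_⟩
  · rintro y ⟨x, hx, rfl⟩
    exact hmono.monotoneOn hmem hx hx.1
  · -- numeric bound
    have hs := sqrt3_bounds
    have hπ := Real.pi_gt_d6
    have hL2 := log2319_gt
    have hL1 : (-1.5581448 : ℝ) < Real.log (4/19 : ℝ) := by
      have e : Real.log (4/19 : ℝ) = - Real.log (19/4 : ℝ) := by
        rw [show (4/19 : ℝ) = (19/4)⁻¹ by norm_num, Real.log_inv]
      rw [e]
      have := log194_lt
      linarith
    have hval : mbar1 (4/19) = π * 5 / (36 * Real.sqrt 3) *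
        (15/38 * Real.log (4/19) + 529/152 * Real.log (23/19)) := by
      unfold mbar1 c6
      have h19 : ((4:ℝ)/19 + 1) = 23/19 := by norm_num
      rw [h19]
      have hs0 : Real.sqrt 3 ≠ 0 := by positivity
      field_simp
      ring
    rw [hval]
    have hS : (0.0498538 : ℝ) < 15/38 * Real.log (4/19) + 529/152 * Real.log (23/19) := by
      nlinarith
    have hsp : (0:ℝ) < Real.sqrt 3 := Real.sqrt_pos.mpr (by norm_num)
    rw [div_mul_eq_mul_div, lt_div_iff₀ (by positivity)]
    nlinarith [Real.pi_pos]
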